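/- Let C be a binary projective three-weight linear code of length n, dimension k and minimum distance d, with A_n(C) > 0. Then every codeword of the dual code C^⊥ has even Hamming weight, A_2(C^⊥) = 0, and for every integer r with 2 ≤ r ≤ ⌊n/2⌋ one has, as an identity of integers, 2^{k−1}·A_{2r}(C^⊥) = binom(n, 2r) + (2^{k−1} − 1)·Σ_{(i,j): 0 ≤ i ≤ d, 0 ≤ j ≤ ⌊n/2⌋ − d, i + j = r} (−1)^i · binom(d, i) · binom(n − 2d, 2j). -/

import Mathlib

/-- Hamming weight of a binary vector: the number of nonzero coordinates. -/
noncomputable def wt {ι : Type*} (c : ι → ZMod 2) : ℕ := Nat.card {i : ι // c i ≠ 0}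

/-- Number of codewords of Hamming weight `w` in a set of binary vectors. -/
noncomputable def weightCount {ι : Type*} (C : Set (ι → ZMod 2)) (w : ℕ) : ℕ :=
  Nat.card {c : ι → ZMod 2 // c ∈ C ∧ wt c = w}

/-- The dual code: all vectors orthogonal (standard inner product) to every codeword. -/
def dualCode {ι : Type*} (C : Set (ι → ZMod 2)) : Set (ι → ZMod 2) :=
  {x | ∀ c ∈ C, ∑ᶠ i, x i * c i = 0}

/-- A code is projective if the minimum distance of its dual is at least 3. -/
def IsProjective {ι : Type*} (C : Set (ι → ZMod 2)) : Prop :=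
  ∀ x ∈ dualCode C, x ≠ 0 → 3 ≤ wt x

/-- `d` is the minimum distance of `C`: the least Hamming weight of a nonzero codeword. -/
def IsMinDist {ι : Type*} (C : Set (ι → ZMod 2)) (d : ℕ) : Prop :=
  (∃ c ∈ C, c ≠ 0 ∧ wt c = d) ∧ ∀ c ∈ C, c ≠ 0 → d ≤ wt c

/-- The number of nonzero Hamming weights occurring among codewords of `C`. -/
noncomputable def numNonzeroWeights {ι : Type*} (C : Set (ι → ZMod 2)) : ℕ :=
  Nat.card {i : ℕ | 1 ≤ i ∧ weightCount C i ≠ 0}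

/-- The codewords of weight `w` in `C` hold a 2-design with index `lam`: every pair of
distinct coordinate positions lies in the support of exactly `lam` codewords of weight `w`. -/
def HoldsTwoDesign {ι : Type*} (C : Set (ι → ZMod 2)) (w lam : ℕ) : Prop :=
  ∀ p q : ι, p ≠ q →
    Nat.card {c : ι → ZMod 2 // c ∈ C ∧ wt c = w ∧ c p ≠ 0 ∧ c q ≠ 0} = lam

open Finset Polynomial


open scoped Classical in
lemma wt_eq {n : ℕ} (c : Fin n → ZMod 2) :
    wt c = (univ.filter (fun i => c i ≠ 0)).card := by
  rw [wt, Nat.card_eq_fintype_card, Fintype.card_subtype]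

-- sign character
def eps (a : ZMod 2) : ℤ := if a = 0 then 1 else -1

lemma eps_add (a b : ZMod 2) : eps (a + b) = eps a * eps b := by revert a b; decide

lemma eps_sum {α : Type*} (s : Finset α) (f : α → ZMod 2) :
    eps (∑ i ∈ s, f i) = ∏ i ∈ s, eps (f i) := by
  induction s using Finset.cons_induction with
  | empty => simp [eps]
  | cons a s ha ih => rw [Finset.sum_cons, Finset.prod_cons, eps_add, ih]

-- coeff of (1 + e X)^m
lemma coeff_one_add_CX_pow (e : ℤ) (m t : ℕ) :
    ((1 + C e * X) ^ m).coeff t = e ^ t * m.choose t := by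
  rw [add_comm, add_pow, finset_sum_coeff]
  have h : ∀ k ∈ Finset.range (m+1),
      ((C e * X)^k * 1^(m-k) * (m.choose k : ℤ[X])).coeff t
        = if k = t then e ^ t * m.choose t else 0 := by
    intro k _
    rw [one_pow, mul_one, mul_pow, ← C_pow, mul_comm, coeff_natCast_mul,
      coeff_C_mul, coeff_X_pow]
    split_ifs with h1 h2 h2
    · subst h2; ring
    · exact absurd h1.symm h2
    · exact absurd h2.symm h1
    · ring
  rw [Finset.sum_congr rfl h, Finset.sum_ite_eq' (Finset.range (m+1))]
  split_ifs with h1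
  · rfl
  · rw [Finset.mem_range, not_lt] at h1
    rw [Nat.choose_eq_zero_of_lt h1]
    simp

lemma coeff_one_add_CX2_pow (e : ℤ) (m t : ℕ) :
    ((1 + C e * X ^ 2) ^ m).coeff t =
      if 2 ∣ t then e ^ (t / 2) * m.choose (t / 2) else 0 := by
  rw [add_comm, add_pow, finset_sum_coeff]
  have h : ∀ k ∈ Finset.range (m+1),
      ((C e * X ^ 2)^k * 1^(m-k) * (m.choose k : ℤ[X])).coeff t
        = if t = 2 * k then e ^ k * m.choose k else 0 := by
    intro k _
    rw [one_pow, mul_one, mul_pow, ← C_pow, ← pow_mul, mul_comm, coeff_natCast_mul,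
      coeff_C_mul, coeff_X_pow]
    split_ifs with h1 <;> [(subst h1; ring); simp]
  rw [Finset.sum_congr rfl h]
  by_cases ht : 2 ∣ t
  · rw [if_pos ht, Finset.sum_eq_single (t / 2)]
    · rw [if_pos (by omega)]
    · intro b _ hb
      rw [if_neg (by omega)]
    · intro hm
      rw [Finset.mem_range, not_lt] at hm
      rw [Nat.choose_eq_zero_of_lt (by omega)]
      simp
  · rw [if_neg ht]
    apply Finset.sum_eq_zero
    intro k _
    rw [if_neg (by omega)]

open scoped Classical

lemma weightCount_eq {n : ℕ} (S : Set (Fin n → ZMod 2)) (w : ℕ) :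
    weightCount S w = (univ.filter (fun c : Fin n → ZMod 2 => c ∈ S ∧ wt c = w)).card := by
  rw [weightCount, Nat.card_eq_fintype_card, Fintype.card_subtype]

lemma factor_eq {n : ℕ} (c : Fin n → ZMod 2) :
    ∑ x : Fin n → ZMod 2, C (eps (∑ i, x i * c i)) * X ^ (wt x)
      = ∏ i, (1 + C (eps (c i)) * X) := by
  have huniv : (Finset.univ : Finset (ZMod 2)) = {0, 1} := by decide
  have h1 : ∀ i ∈ (univ : Finset (Fin n)), (1 + C (eps (c i)) * X : ℤ[X])
      = ∑ a : ZMod 2, C (eps (a * c i)) * X ^ (if a = 0 then 0 else 1) := by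
    intro i _
    rw [huniv, Finset.sum_insert (by decide), Finset.sum_singleton]
    simp [eps]
  rw [Finset.prod_congr rfl h1, Finset.prod_univ_sum]
  rw [Fintype.piFinset_univ]
  apply Finset.sum_congr rfl
  intro x _
  rw [Finset.prod_mul_distrib, ← map_prod, ← eps_sum]
  congr 1
  rw [Finset.prod_pow_eq_pow_sum]
  congr 1
  rw [wt_eq, Finset.card_filter]
  apply Finset.sum_congr rfl
  intro i _
  by_cases h : x i = 0 <;> simp [h]

lemma prod_eq {n : ℕ} (c : Fin n → ZMod 2) :
    ∏ i, (1 + C (eps (c i)) * X)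
      = (1 + C (-1 : ℤ) * X) ^ (wt c) * (1 + C (1 : ℤ) * X) ^ (n - wt c) := by
  rw [← Finset.prod_filter_mul_prod_filter_not Finset.univ (fun i => c i ≠ 0)]
  congr 1
  · rw [Finset.prod_congr rfl (g := fun _ => (1 + C (-1:ℤ) * X)) (fun i hi => by
      rw [Finset.mem_filter] at hi
      rw [eps, if_neg hi.2]), Finset.prod_const, wt_eq]
  · rw [Finset.prod_congr rfl (g := fun _ => (1 + C (1:ℤ) * X)) (fun i hi => by
      rw [Finset.mem_filter] at hi
      push_neg at hi
      rw [eps, if_pos hi.2]), Finset.prod_const, wt_eq]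
    congr 1
    have := Finset.card_filter_add_card_filter_not (s := (univ : Finset (Fin n)))
      (p := fun i => c i ≠ 0)
    simp only [Finset.card_univ, Fintype.card_fin] at this
    omega

lemma sum_eps_eq_coeff {n : ℕ} (c : Fin n → ZMod 2) (w : ℕ) :
    ∑ x ∈ univ.filter (fun x : Fin n → ZMod 2 => wt x = w), eps (∑ i, x i * c i)
      = ((1 + C (-1 : ℤ) * X) ^ (wt c) * (1 + C (1 : ℤ) * X) ^ (n - wt c)).coeff w := by
  rw [← prod_eq, ← factor_eq, finset_sum_coeff, Finset.sum_filter]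
  apply Finset.sum_congr rfl
  intro x _
  rw [coeff_C_mul, coeff_X_pow]
  split_ifs with h1 h2 h2 <;> simp_all

lemma mem_dualCode {n : ℕ} (S : Set (Fin n → ZMod 2)) (x : Fin n → ZMod 2) :
    x ∈ dualCode S ↔ ∀ c ∈ S, ∑ i, x i * c i = 0 := by
  unfold dualCode
  simp only [Set.mem_setOf_eq, finsum_eq_sum_of_fintype]

lemma orth {n : ℕ} (Cc : Submodule (ZMod 2) (Fin n → ZMod 2)) (x : Fin n → ZMod 2) :
    ∑ c ∈ univ.filter (· ∈ Cc), eps (∑ i, x i * c i)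
      = if x ∈ dualCode (Cc : Set (Fin n → ZMod 2)) then ((univ.filter (· ∈ Cc)).card : ℤ)
        else 0 := by
  split_ifs with hx
  · rw [mem_dualCode] at hx
    rw [Finset.sum_congr rfl (g := fun _ => (1:ℤ)) (fun c hc => by
      rw [Finset.mem_filter] at hc
      rw [hx c hc.2, eps, if_pos rfl]), Finset.sum_const, nsmul_eq_mul, mul_one]
  · rw [mem_dualCode] at hx
    push_neg at hx
    obtain ⟨c0, hc0, hne⟩ := hx
    set F := univ.filter (· ∈ Cc) with hF
    set S := ∑ c ∈ F, eps (∑ i, x i * c i) with hS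
    have hst : ∀ c, c ∈ F ↔ (Equiv.addRight c0) c ∈ F := by
      intro c
      simp only [hF, Finset.mem_filter, Finset.mem_univ, true_and, Equiv.coe_addRight]
      constructor
      · exact fun h => Cc.add_mem h hc0
      · intro h; simpa using Cc.add_mem h (Cc.neg_mem hc0)
    have h2 : ∑ c ∈ F, eps (∑ i, x i * (c + c0) i) = S :=
      Finset.sum_equiv (Equiv.addRight c0) hst (fun i _ => rfl)
    have h3 : ∀ c ∈ F, eps (∑ i, x i * (c + c0) i) = - eps (∑ i, x i * c i) := by
      intro c _
      have he : (∑ i, x i * (c + c0) i) = (∑ i, x i * c i) + ∑ i, x i * c0 i := by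
        rw [← Finset.sum_add_distrib]
        exact Finset.sum_congr rfl (fun i _ => by simp [mul_add])
      have hz : ∀ u v : ZMod 2, u ≠ 0 → v ≠ 0 → u + v = 0 := by decide
      simp only [he, eps]
      split_ifs with ha hb hb
      · exact absurd (by rwa [hb, zero_add] at ha) hne
      · norm_num
      · norm_num
      · exact absurd (hz _ _ hb hne) ha
    have h4 : S = -S := by
      conv_lhs => rw [← h2]
      rw [Finset.sum_congr rfl h3, ← Finset.sum_neg_distrib]
    linarith

lemma macwilliams_raw {n : ℕ} (Cc : Submodule (ZMod 2) (Fin n → ZMod 2)) (w : ℕ) :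
    (((univ.filter (· ∈ Cc)).card : ℤ)) * weightCount (dualCode (Cc : Set (Fin n → ZMod 2))) w
      = ∑ c ∈ univ.filter (· ∈ Cc),
          ((1 + C (-1 : ℤ) * X) ^ (wt c) * (1 + C (1 : ℤ) * X) ^ (n - wt c)).coeff w := by
  have h1 : ∀ c ∈ univ.filter (· ∈ Cc),
      ((1 + C (-1 : ℤ) * X) ^ (wt c) * (1 + C (1 : ℤ) * X) ^ (n - wt c)).coeff w
        = ∑ x ∈ univ.filter (fun x : Fin n → ZMod 2 => wt x = w), eps (∑ i, x i * c i) :=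
    fun c _ => (sum_eps_eq_coeff c w).symm
  rw [Finset.sum_congr rfl h1, Finset.sum_comm]
  rw [Finset.sum_congr rfl (fun x _ => orth Cc x)]
  rw [← Finset.sum_filter, Finset.sum_const, nsmul_eq_mul, weightCount_eq, Finset.filter_filter,
    mul_comm]
  congr 2
  · congr 1
    apply Finset.filter_congr
    intro x _
    tauto

lemma wt_le {n : ℕ} (c : Fin n → ZMod 2) : wt c ≤ n := by
  rw [wt_eq]
  exact (Finset.card_filter_le _ _).trans (by simp)

lemma wt_eq_zero_iff {n : ℕ} (c : Fin n → ZMod 2) : wt c = 0 ↔ c = 0 := by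
  rw [wt_eq, Finset.card_eq_zero, Finset.filter_eq_empty_iff]
  constructor
  · intro h
    funext i
    have := h (Finset.mem_univ i)
    simpa using this
  · intro h i _
    simp [h]

lemma wt_eq_n_iff {n : ℕ} (c : Fin n → ZMod 2) : wt c = n ↔ c = 1 := by
  rw [wt_eq]
  constructor
  · intro h
    have : (univ.filter (fun i => c i ≠ 0)) = univ :=
      Finset.eq_univ_of_card _ (by simpa using h)
    funext i
    have hi : c i ≠ 0 := by
      have := Finset.mem_filter.mp (this ▸ Finset.mem_univ i)
      exact this.2
    have hz : ∀ u : ZMod 2, u ≠ 0 → u = 1 := by decide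
    exact hz _ hi
  · intro h
    subst h
    rw [Finset.filter_true_of_mem (fun i _ => by simp)]
    simp

lemma wt_add_one {n : ℕ} (c : Fin n → ZMod 2) : wt (c + 1) = n - wt c := by
  have h1 : ∀ u : ZMod 2, u + 1 ≠ 0 ↔ u = 0 := by decide
  rw [wt_eq, wt_eq]
  have h2 : (univ.filter (fun i => (c + 1) i ≠ 0))
      = univ.filter (fun i => ¬ (c i ≠ 0)) := by
    apply Finset.filter_congr
    intro i _
    simp only [Pi.add_apply, Pi.one_apply, h1 (c i), not_not]
  rw [h2]
  have := Finset.card_filter_add_card_filter_not (s := (univ : Finset (Fin n)))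
    (p := fun i => c i ≠ 0)
  simp only [Finset.card_univ, Fintype.card_fin] at this
  omega

lemma weightCount_ne_zero_iff {n : ℕ} (S : Set (Fin n → ZMod 2)) (w : ℕ) :
    weightCount S w ≠ 0 ↔ ∃ c ∈ S, wt c = w := by
  rw [weightCount_eq, ← Nat.pos_iff_ne_zero, Finset.card_pos]
  constructor
  · rintro ⟨c, hc⟩
    rw [Finset.mem_filter] at hc
    exact ⟨c, hc.2.1, hc.2.2⟩
  · rintro ⟨c, hc1, hc2⟩
    exact ⟨c, Finset.mem_filter.mpr ⟨Finset.mem_univ _, hc1, hc2⟩⟩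

lemma structure_main {n k d : ℕ} (Cc : Submodule (ZMod 2) (Fin n → ZMod 2))
    (hk : Module.finrank (ZMod 2) Cc = k)
    (hd : IsMinDist (Cc : Set (Fin n → ZMod 2)) d)
    (h3 : numNonzeroWeights (Cc : Set (Fin n → ZMod 2)) = 3)
    (hAn : 0 < weightCount (Cc : Set (Fin n → ZMod 2)) n) :
    (1 : Fin n → ZMod 2) ∈ Cc ∧ 1 ≤ d ∧ 2 * d < n ∧ 2 ≤ k ∧
    (∀ c, c ∈ Cc → wt c = 0 ∨ wt c = d ∨ wt c = n - d ∨ wt c = n) ∧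
    weightCount (Cc : Set (Fin n → ZMod 2)) d = 2 ^ (k - 1) - 1 ∧
    weightCount (Cc : Set (Fin n → ZMod 2)) (n - d) = 2 ^ (k - 1) - 1 ∧
    weightCount (Cc : Set (Fin n → ZMod 2)) 0 = 1 ∧
    weightCount (Cc : Set (Fin n → ZMod 2)) n = 1 := by
  classical
  set W : Set ℕ := {i : ℕ | 1 ≤ i ∧ weightCount (Cc : Set (Fin n → ZMod 2)) i ≠ 0} with hW
  have hW3 : W.ncard = 3 := by
    rw [Set.ncard, ← h3]; rfl
  have hWbound : ∀ w ∈ W, 1 ≤ w ∧ w ≤ n := by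
    intro w hw
    obtain ⟨c, _, hc2⟩ := (weightCount_ne_zero_iff _ _).mp hw.2
    exact ⟨hw.1, hc2 ▸ wt_le c⟩
  have hWfin : W.Finite := Set.Finite.subset (Set.finite_Iic n) (fun w hw => (hWbound w hw).2)
  -- the all-ones vector is in Cc
  obtain ⟨cone, honeC, honewt⟩ := (weightCount_ne_zero_iff _ _).mp (Nat.pos_iff_ne_zero.mp hAn)
  have hone : (1 : Fin n → ZMod 2) ∈ Cc := by
    rw [← (wt_eq_n_iff cone).mp honewt]; exact honeC
  -- min dist witness
  obtain ⟨⟨cd, hcdC, hcd0, hcdwt⟩, hmin⟩ := hd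
  have hd1 : 1 ≤ d := by
    rw [← hcdwt]
    rcases Nat.eq_zero_or_pos (wt cd) with h | h
    · exact absurd ((wt_eq_zero_iff cd).mp h) hcd0
    · exact h
  have hdn : d ≤ n := hcdwt ▸ wt_le cd
  have hn1 : 1 ≤ n := le_trans hd1 hdn
  -- d < n
  have hdltn : d < n := by
    rcases lt_or_eq_of_le hdn with h | h
    · exact h
    · exfalso
      have hsub : W ⊆ {n} := by
        intro w hw
        obtain ⟨c, hc1, hc2⟩ := (weightCount_ne_zero_iff _ _).mp hw.2
        have hc0 : c ≠ 0 := by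
          intro h0
          rw [h0, (wt_eq_zero_iff (0 : Fin n → ZMod 2)).mpr rfl] at hc2
          have := hw.1
          omega
        have := hmin c hc1 hc0
        have := wt_le c
        have : w = n := by omega
        simp [this]
      have := Set.ncard_le_ncard hsub (Set.finite_singleton n)
      rw [hW3, Set.ncard_singleton] at this
      omega
  -- basic memberships in W
  have hdW : d ∈ W := ⟨hd1, (weightCount_ne_zero_iff _ _).mpr ⟨cd, hcdC, hcdwt⟩⟩
  have hnW : n ∈ W := ⟨hn1, Nat.pos_iff_ne_zero.mp hAn⟩
  have hshift : ∀ c, c ∈ Cc → (n - wt c) = wt (c + 1) := fun c _ => (wt_add_one c).symm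
  have hndW : (n - d) ∈ W := by
    refine ⟨by omega, (weightCount_ne_zero_iff _ _).mpr ⟨cd + 1, Cc.add_mem hcdC hone, ?_⟩⟩
    rw [wt_add_one, hcdwt]
  -- d ≠ n - d
  have hdne : d ≠ n - d := by
    intro heq
    have hpair : ({d, n} : Set ℕ) ⊆ W := by
      intro w hw
      rcases hw with h | h
      · exact h ▸ hdW
      · exact (Set.mem_singleton_iff.mp h) ▸ hnW
    have hnotsub : ¬ W ⊆ ({d, n} : Set ℕ) := by
      intro hsub
      have := Set.ncard_le_ncard hsub ((Set.finite_singleton n).insert d)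
      have h2 : ({d, n} : Set ℕ).ncard ≤ 2 := by
        have := Set.ncard_insert_le d ({n} : Set ℕ)
        rw [Set.ncard_singleton] at this
        omega
      omega
    obtain ⟨w, hwW, hwpair⟩ := Set.not_subset.mp hnotsub
    simp only [Set.mem_insert_iff, Set.mem_singleton_iff, not_or] at hwpair
    obtain ⟨hwd, hwn⟩ := hwpair
    obtain ⟨c, hc1, hc2⟩ := (weightCount_ne_zero_iff _ _).mp hwW.2
    have hwb := hWbound w hwW
    have hnwW : (n - w) ∈ W := by
      refine ⟨by omega, (weightCount_ne_zero_iff _ _).mpr ⟨c + 1, Cc.add_mem hc1 hone, ?_⟩⟩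
      rw [wt_add_one, hc2]
    have hWeq : W = {d, n, w} := by
      symm
      apply Set.eq_of_subset_of_ncard_le
      · intro y hy
        rcases hy with h | h | h
        · exact h ▸ hdW
        · exact h ▸ hnW
        · exact (Set.mem_singleton_iff.mp h) ▸ hwW
      · rw [hW3]
        have : ({d, n, w} : Set ℕ).ncard = 3 := by
          rw [Set.ncard_insert_of_notMem (by simp; omega),
            Set.ncard_insert_of_notMem (by simp; omega), Set.ncard_singleton]
        omega
      · exact hWfin
    have : (n - w) ∈ ({d, n, w} : Set ℕ) := hWeq ▸ hnwW
    rcases this with h | h | h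
    · omega
    · omega
    · rw [Set.mem_singleton_iff] at h; omega
  -- min dist gives d ≤ n - d
  have hd_le : d ≤ n - d := by
    have hcd1 : cd + 1 ≠ 0 := by
      intro h0
      have : cd = 1 := by
        have := congrArg (· + (1 : Fin n → ZMod 2)) h0
        simpa [add_assoc, show (1 : Fin n → ZMod 2) + 1 = 0 by funext i; simp [Pi.add_apply]; rfl]
          using this
      rw [this] at hcdwt
      rw [(wt_eq_n_iff (1 : Fin n → ZMod 2)).mpr rfl] at hcdwt
      omega
    have := hmin (cd + 1) (Cc.add_mem hcdC hone) hcd1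
    rw [wt_add_one, hcdwt] at this
    exact this
  have h2d : 2 * d < n := by omega
  -- W is exactly {d, n-d, n}
  have hWeq : W = {d, n - d, n} := by
    symm
    apply Set.eq_of_subset_of_ncard_le
    · intro y hy
      rcases hy with h | h | h
      · exact h ▸ hdW
      · exact h ▸ hndW
      · exact (Set.mem_singleton_iff.mp h) ▸ hnW
    · rw [hW3]
      have : ({d, n - d, n} : Set ℕ).ncard = 3 := by
        rw [Set.ncard_insert_of_notMem (by simp; omega),
          Set.ncard_insert_of_notMem (by simp; omega), Set.ncard_singleton]
      omega
    · exact hWfin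
  -- weight classification
  have hclass : ∀ c, c ∈ Cc → wt c = 0 ∨ wt c = d ∨ wt c = n - d ∨ wt c = n := by
    intro c hc
    rcases Nat.eq_zero_or_pos (wt c) with h | h
    · exact Or.inl h
    · have : wt c ∈ W := ⟨h, (weightCount_ne_zero_iff _ _).mpr ⟨c, hc, rfl⟩⟩
      rw [hWeq] at this
      rcases this with h | h | h
      · exact Or.inr (Or.inl h)
      · exact Or.inr (Or.inr (Or.inl h))
      · exact Or.inr (Or.inr (Or.inr (Set.mem_singleton_iff.mp h)))
  -- counting
  set F : Finset (Fin n → ZMod 2) := univ.filter (· ∈ Cc) with hF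
  have hcard : F.card = 2 ^ k := by
    have h1 : Fintype.card Cc = 2 ^ k := by
      have := Module.card_eq_pow_finrank (K := ZMod 2) (V := Cc)
      rwa [ZMod.card, hk] at this
    rw [← h1, hF]
    exact (Fintype.card_subtype _).symm
  have hWC : ∀ w, weightCount (Cc : Set (Fin n → ZMod 2)) w
      = (F.filter (fun c => wt c = w)).card := by
    intro w
    rw [weightCount_eq, hF, Finset.filter_filter]
    rfl
  have hA0 : (F.filter (fun c => wt c = 0)).card = 1 := by
    have he : F.filter (fun c => wt c = 0) = {0} := by
      ext c
      simp only [hF, Finset.mem_filter, Finset.mem_univ, true_and, Finset.mem_singleton]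
      rw [wt_eq_zero_iff]
      exact ⟨fun h => h.2, fun h => ⟨h ▸ Cc.zero_mem, h⟩⟩
    rw [he, Finset.card_singleton]
  have hAn1 : (F.filter (fun c => wt c = n)).card = 1 := by
    have he : F.filter (fun c => wt c = n) = {1} := by
      ext c
      simp only [hF, Finset.mem_filter, Finset.mem_univ, true_and, Finset.mem_singleton]
      rw [wt_eq_n_iff]
      exact ⟨fun h => h.2, fun h => ⟨h ▸ hone, h⟩⟩
    rw [he, Finset.card_singleton]
  have honeone : (1 : Fin n → ZMod 2) + 1 = 0 := by
    funext i
    simp only [Pi.add_apply, Pi.one_apply, Pi.zero_apply]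
    decide
  have hinv : ∀ c : Fin n → ZMod 2, c + 1 + 1 = c := by
    intro c
    rw [add_assoc, honeone, add_zero]
  have hAd_nd : (F.filter (fun c => wt c = d)).card
      = (F.filter (fun c => wt c = n - d)).card := by
    apply Finset.card_nbij' (i := (· + 1)) (j := (· + 1))
    · intro c hc
      simp only [hF, Finset.mem_coe, Finset.mem_filter, Finset.mem_univ, true_and] at hc ⊢
      exact ⟨Cc.add_mem hc.1 hone, by rw [wt_add_one, hc.2]⟩
    · intro c hc
      simp only [hF, Finset.mem_coe, Finset.mem_filter, Finset.mem_univ, true_and] at hc ⊢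
      refine ⟨Cc.add_mem hc.1 hone, by rw [wt_add_one, hc.2]; omega⟩
    · intro c _; exact hinv c
    · intro c _; exact hinv c
  have hmaps : ∀ c ∈ F, wt c ∈ ({0, d, n - d, n} : Finset ℕ) := by
    intro c hc
    simp only [hF, Finset.mem_filter, Finset.mem_univ, true_and] at hc
    simp only [Finset.mem_insert, Finset.mem_singleton]
    exact hclass c hc
  have hpart : F.card = ∑ w ∈ ({0, d, n - d, n} : Finset ℕ),
      (F.filter (fun c => wt c = w)).card :=
    Finset.card_eq_sum_card_fiberwise hmaps
  rw [Finset.sum_insert (by simp; omega), Finset.sum_insert (by simp; omega),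
    Finset.sum_insert (by simp; omega), Finset.sum_singleton, hcard,
    hA0, hAn1, ← hAd_nd] at hpart
  have hAd1 : 1 ≤ (F.filter (fun c => wt c = d)).card := by
    have := hdW.2
    rw [hWC d] at this
    omega
  have hk2 : 2 ≤ k := by
    by_contra hlt
    have hk1 : k ≤ 1 := by omega
    have := Nat.pow_le_pow_right (show 1 ≤ 2 by norm_num) hk1
    omega
  have hpow : 2 ^ k = 2 * 2 ^ (k - 1) := by
    rw [← pow_succ']
    congr 1
    omega
  refine ⟨hone, hd1, h2d, hk2, hclass, ?_, ?_, ?_, ?_⟩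
  · rw [hWC d]; omega
  · rw [hWC (n - d), ← hAd_nd]; omega
  · rw [hWC 0]; exact hA0
  · rw [hWC n]; exact hAn1

lemma sum_range_even (N : ℕ) (g : ℕ → ℤ) (h : ∀ m, ¬ 2 ∣ m → g m = 0) :
    ∑ m ∈ Finset.range (2 * N + 1), g m = ∑ i ∈ Finset.range (N + 1), g (2 * i) := by
  induction N with
  | zero => simp
  | succ N ih =>
    have he : 2 * (N + 1) + 1 = (2 * N + 1) + 1 + 1 := by ring
    rw [he, Finset.sum_range_succ, Finset.sum_range_succ, h (2 * N + 1) (by omega),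
      add_zero, ih, Finset.sum_range_succ]
    have h2 : 2 * N + 1 + 1 = 2 * (N + 1) := by omega
    rw [h2, Finset.sum_range_succ (f := fun i => g (2 * i)) (n := N + 1),
      Finset.sum_range_succ (f := fun i => g (2 * i)) (n := N)]

lemma coeff_main (d m r : ℕ) (e : ℤ) (he : e = 1 ∨ e = -1) :
    ((1 + C (-1 : ℤ) * X ^ 2) ^ d * (1 + C e * X) ^ m).coeff (2 * r)
      = ∑ i ∈ Finset.range (r + 1), (-1 : ℤ) ^ i * d.choose i * m.choose (2 * (r - i)) := by
  rw [Polynomial.coeff_mul, Finset.Nat.sum_antidiagonal_eq_sum_range_succ_mk]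
  have hterm : ∀ a ∈ Finset.range (2 * r + 1),
      ((1 + C (-1:ℤ) * X ^ 2) ^ d).coeff a * ((1 + C e * X) ^ m).coeff (2 * r - a)
        = if 2 ∣ a then
            (-1:ℤ) ^ (a / 2) * d.choose (a / 2) * (e ^ (2 * r - a) * m.choose (2 * r - a))
          else 0 := by
    intro a _
    rw [coeff_one_add_CX2_pow, coeff_one_add_CX_pow]
    split_ifs with h1
    · ring
    · rw [zero_mul]
  rw [Finset.sum_congr rfl hterm,
    sum_range_even r _ (fun m' hm' => by rw [if_neg hm'])]
  apply Finset.sum_congr rfl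
  intro i hi
  rw [Finset.mem_range] at hi
  rw [if_pos ⟨i, rfl⟩]
  have h1 : 2 * i / 2 = i := by omega
  have h2 : 2 * r - 2 * i = 2 * (r - i) := by omega
  rw [h1, h2]
  have he2 : e ^ (2 * (r - i)) = 1 := by
    rcases he with h | h <;> simp [h, pow_mul]
  rw [he2]
  ring

lemma split_d {n d : ℕ} (hd2 : 2 * d ≤ n) :
    (1 + C (-1:ℤ) * X) ^ d * (1 + C (1:ℤ) * X) ^ (n - d)
      = (1 + C (-1:ℤ) * X ^ 2) ^ d * (1 + C (1:ℤ) * X) ^ (n - 2 * d) := by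
  rw [show n - d = d + (n - 2 * d) by omega, pow_add, ← mul_assoc, ← mul_pow]
  congr 2
  simp only [map_neg, map_one]
  ring

lemma split_nd {n d : ℕ} (hd2 : 2 * d ≤ n) :
    (1 + C (-1:ℤ) * X) ^ (n - d) * (1 + C (1:ℤ) * X) ^ d
      = (1 + C (-1:ℤ) * X ^ 2) ^ d * (1 + C (-1:ℤ) * X) ^ (n - 2 * d) := by
  rw [show n - d = d + (n - 2 * d) by omega, pow_add]
  rw [show (1 + C (-1:ℤ) * X) ^ d * (1 + C (-1:ℤ) * X) ^ (n - 2*d) * (1 + C (1:ℤ) * X) ^ d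
      = ((1 + C (-1:ℤ) * X) * (1 + C (1:ℤ) * X)) ^ d * (1 + C (-1:ℤ) * X) ^ (n - 2*d) by
    rw [mul_pow]; ring]
  congr 2
  simp only [map_neg, map_one]
  ring

lemma target_sum {n d r : ℕ} (h2d : 2 * d < n) (hr : r ≤ n / 2) :
    ∑ p ∈ (Finset.range (d + 1) ×ˢ Finset.range (n / 2 - d + 1)).filter
        (fun p => p.1 + p.2 = r),
      (-1 : ℤ) ^ p.1 * (d.choose p.1) * ((n - 2 * d).choose (2 * p.2))
    = ∑ i ∈ Finset.range (r + 1),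
        (-1:ℤ) ^ i * d.choose i * (n - 2 * d).choose (2 * (r - i)) := by
  have hvanish : ∀ x ∈ Finset.range (r + 1),
      ((-1:ℤ) ^ x * d.choose x * (n - 2 * d).choose (2 * (r - x))) ≠ 0 →
        (x ≤ d ∧ r - x ≤ n / 2 - d) := by
    intro x _ hx
    constructor
    · by_contra h
      exact hx (by rw [Nat.choose_eq_zero_of_lt (by omega)]; push_cast; ring)
    · by_contra h
      refine hx ?_
      have hlt : n - 2 * d < 2 * (r - x) := by omega
      rw [Nat.choose_eq_zero_of_lt hlt]
      push_cast
      ring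
  rw [← Finset.sum_filter_of_ne hvanish]
  refine Finset.sum_nbij' (i := fun p => p.1) (j := fun i => (i, r - i)) ?_ ?_ ?_ ?_ ?_
  · intro p hp
    simp only [Finset.mem_filter, Finset.mem_product, Finset.mem_range] at hp ⊢
    omega
  · intro i hi
    simp only [Finset.mem_filter, Finset.mem_product, Finset.mem_range] at hi ⊢
    omega
  · intro p hp
    simp only [Finset.mem_filter, Finset.mem_product, Finset.mem_range] at hp
    have h2 : r - p.1 = p.2 := by omega
    rw [Prod.ext_iff]
    exact ⟨rfl, h2⟩
  · intro i hi
    rfl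
  · intro p hp
    simp only [Finset.mem_filter, Finset.mem_product, Finset.mem_range] at hp
    have h2 : r - p.1 = p.2 := by omega
    rw [h2]

lemma key_id {n k d : ℕ} (Cc : Submodule (ZMod 2) (Fin n → ZMod 2))
    (hk : Module.finrank (ZMod 2) Cc = k)
    (hd : IsMinDist (Cc : Set (Fin n → ZMod 2)) d)
    (h3 : numNonzeroWeights (Cc : Set (Fin n → ZMod 2)) = 3)
    (hAn : 0 < weightCount (Cc : Set (Fin n → ZMod 2)) n) (r : ℕ) :
    (2:ℤ) ^ (k - 1) * weightCount (dualCode (Cc : Set (Fin n → ZMod 2))) (2 * r)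
      = (n.choose (2 * r) : ℤ) + ((2:ℤ) ^ (k - 1) - 1) *
          ∑ i ∈ Finset.range (r + 1),
            (-1:ℤ) ^ i * d.choose i * (n - 2 * d).choose (2 * (r - i)) := by
  classical
  obtain ⟨hone, hd1, h2d, hk2, hclass, hAd, hAnd, hA0, hAn1⟩ :=
    structure_main Cc hk hd h3 hAn
  set F : Finset (Fin n → ZMod 2) := univ.filter (· ∈ Cc) with hF
  have hcard : F.card = 2 ^ k := by
    have h1 : Fintype.card Cc = 2 ^ k := by
      have := Module.card_eq_pow_finrank (K := ZMod 2) (V := Cc)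
      rwa [ZMod.card, hk] at this
    rw [← h1, hF]
    exact (Fintype.card_subtype _).symm
  have hWC : ∀ w, weightCount (Cc : Set (Fin n → ZMod 2)) w
      = (F.filter (fun c => wt c = w)).card := by
    intro w
    rw [weightCount_eq, hF, Finset.filter_filter]
    rfl
  have hmaps : ∀ c ∈ F, wt c ∈ ({0, d, n - d, n} : Finset ℕ) := by
    intro c hc
    simp only [hF, Finset.mem_filter, Finset.mem_univ, true_and] at hc
    simp only [Finset.mem_insert, Finset.mem_singleton]
    exact hclass c hc
  have hM := macwilliams_raw Cc (2 * r)
  rw [← hF, hcard] at hM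
  have hfib : ∑ c ∈ F, ((1 + C (-1:ℤ) * X) ^ (wt c)
        * (1 + C (1:ℤ) * X) ^ (n - wt c)).coeff (2 * r)
      = ∑ w ∈ ({0, d, n - d, n} : Finset ℕ),
          ((F.filter (fun c => wt c = w)).card : ℤ) *
            ((1 + C (-1:ℤ) * X) ^ w * (1 + C (1:ℤ) * X) ^ (n - w)).coeff (2 * r) := by
    rw [← Finset.sum_fiberwise_of_maps_to (g := wt) hmaps]
    apply Finset.sum_congr rfl
    intro w _
    rw [Finset.sum_congr rfl (fun c hc => by
      rw [(Finset.mem_filter.mp hc).2]), Finset.sum_const, nsmul_eq_mul]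
  rw [hfib] at hM
  rw [Finset.sum_insert (by simp; omega), Finset.sum_insert (by simp; omega),
    Finset.sum_insert (by simp; omega), Finset.sum_singleton] at hM
  -- coefficient values
  set S : ℤ := ∑ i ∈ Finset.range (r + 1),
      (-1:ℤ) ^ i * d.choose i * (n - 2 * d).choose (2 * (r - i)) with hS
  have hv0 : ((1 + C (-1:ℤ) * X) ^ 0 * (1 + C (1:ℤ) * X) ^ (n - 0)).coeff (2 * r)
      = (n.choose (2 * r) : ℤ) := by
    rw [pow_zero, one_mul, Nat.sub_zero, coeff_one_add_CX_pow]
    simp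
  have hvn : ((1 + C (-1:ℤ) * X) ^ n * (1 + C (1:ℤ) * X) ^ (n - n)).coeff (2 * r)
      = (n.choose (2 * r) : ℤ) := by
    rw [Nat.sub_self, pow_zero, mul_one, coeff_one_add_CX_pow]
    rw [pow_mul]
    norm_num
  have hvd : ((1 + C (-1:ℤ) * X) ^ d * (1 + C (1:ℤ) * X) ^ (n - d)).coeff (2 * r) = S := by
    rw [split_d (by omega), coeff_main d (n - 2 * d) r 1 (Or.inl rfl)]
  have hvnd : ((1 + C (-1:ℤ) * X) ^ (n - d)
      * (1 + C (1:ℤ) * X) ^ (n - (n - d))).coeff (2 * r) = S := by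
    rw [show n - (n - d) = d by omega, split_nd (by omega),
      coeff_main d (n - 2 * d) r (-1) (Or.inr rfl)]
  rw [hv0, hvn, hvd, hvnd, ← hWC 0, ← hWC d, ← hWC (n - d), ← hWC n,
    hA0, hAn1, hAd, hAnd] at hM
  have hcast : (((2:ℕ) ^ (k - 1) - 1 : ℕ) : ℤ) = (2:ℤ) ^ (k - 1) - 1 := by
    have h1 : (1:ℕ) ≤ 2 ^ (k - 1) := Nat.one_le_two_pow
    push_cast [h1]
    ring
  rw [hcast] at hM
  have h2k : (2:ℤ) ^ k = 2 * 2 ^ (k - 1) := by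
    rw [← pow_succ']
    congr 1
    omega
  push_cast at hM
  rw [h2k] at hM
  apply mul_left_cancel₀ (show (2:ℤ) ≠ 0 by norm_num)
  linear_combination hM


theorem dual_weight_distribution_of_projective_three_weight (n k d : ℕ) (C : Submodule (ZMod 2) (Fin n → ZMod 2))
    (hk : Module.finrank (ZMod 2) C = k)
    (hd : IsMinDist (C : Set (Fin n → ZMod 2)) d)
    (hproj : IsProjective (C : Set (Fin n → ZMod 2)))
    (h3 : numNonzeroWeights (C : Set (Fin n → ZMod 2)) = 3)
    (hAn : 0 < weightCount (C : Set (Fin n → ZMod 2)) n) :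
    (∀ x ∈ dualCode (C : Set (Fin n → ZMod 2)), Even (wt x)) ∧
    weightCount (dualCode (C : Set (Fin n → ZMod 2))) 2 = 0 ∧
    ∀ r : ℕ, 2 ≤ r → r ≤ n / 2 →
      (2 : ℤ) ^ (k - 1) * weightCount (dualCode (C : Set (Fin n → ZMod 2))) (2 * r) =
        (n.choose (2 * r) : ℤ) + ((2 : ℤ) ^ (k - 1) - 1) *
          ∑ p ∈ (Finset.range (d + 1) ×ˢ Finset.range (n / 2 - d + 1)).filter
              (fun p => p.1 + p.2 = r),
            (-1 : ℤ) ^ p.1 * (d.choose p.1) * ((n - 2 * d).choose (2 * p.2)) := by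
  classical
  obtain ⟨hone, hd1, h2d, hk2, hclass, hAd, hAnd, hA0, hAn1⟩ :=
    structure_main C hk hd h3 hAn
  refine ⟨?_, ?_, ?_⟩
  · -- every dual codeword has even weight
    intro x hx
    have h1 := (mem_dualCode (C : Set (Fin n → ZMod 2)) x).mp hx 1 hone
    have h2 : ∑ i, x i * (1 : Fin n → ZMod 2) i = ((wt x : ℕ) : ZMod 2) := by
      simp only [Pi.one_apply, mul_one]
      rw [← Finset.sum_filter_ne_zero (s := univ)]
      rw [Finset.sum_congr rfl (g := fun _ => (1 : ZMod 2)) (fun i hi => by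
        have hz : ∀ u : ZMod 2, u ≠ 0 → u = 1 := by decide
        exact hz _ (Finset.mem_filter.mp hi).2)]
      rw [Finset.sum_const, nsmul_eq_mul, mul_one, wt_eq]
    rw [h2] at h1
    have := (ZMod.natCast_eq_zero_iff (wt x) 2).mp h1
    exact (Nat.even_iff).mpr (Nat.mod_eq_zero_of_dvd this)
  · -- no dual codewords of weight 2
    rw [weightCount_eq, Finset.card_eq_zero, Finset.filter_eq_empty_iff]
    intro x _
    rintro ⟨hxd, hwt⟩
    have hx0 : x ≠ 0 := by
      intro h0
      rw [h0, (wt_eq_zero_iff (0 : Fin n → ZMod 2)).mpr rfl] at hwt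
      omega
    have := hproj x hxd hx0
    omega
  · intro r hr2 hrn
    rw [key_id C hk hd h3 hAn r, target_sum h2d hrn]
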